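/- In any k-ribbon tiling of a k-ribbon Fibonacci shape, every k-ribbon lies entirely within a single column of the shape: each column of height 1 arising from a letter 1_j is tiled by exactly one k-ribbon, which has height j, and each column of height 2 (arising from a letter 2) is tiled by exactly two k-ribbons, one of some height j stacked on top of one of height k+1−j. Consequently, all k-ribbon tilings of a given k-ribbon Fibonacci shape have the same number of k-ribbons and involve the same columns. -/

import Mathlib

namespace KRF

/-- A letter of the alphabet `{1_1, …, 1_k, 2}`:  `one j` stands for the letter `1_j`
(with `1 ≤ j ≤ k` for genuine letters), and `two` stands for the letter `2`. -/
inductive Letter (k : ℕ) : Type where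
  | one : ℕ → Letter k
  | two : Letter k
deriving DecidableEq

/-- A word over the alphabet `{1_1, …, 1_k, 2}`, listed from the leftmost letter to the
rightmost letter. -/
abbrev Word (k : ℕ) := List (Letter k)

/-- The contribution of a letter to the rank: each `1_j` counts `1` and each `2` counts `2`. -/
def Letter.rank {k : ℕ} : Letter k → ℕ
  | .one _ => 1
  | .two => 2

/-- The rank of a word: the sum of its letters. -/
def Word.rank {k : ℕ} (w : Word k) : ℕ := (w.map Letter.rank).sum

/-- The letter `1_j` is valid when `1 ≤ j ≤ k`. -/
def Letter.Valid (k : ℕ) : Letter k → Prop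
  | .one j => 1 ≤ j ∧ j ≤ k
  | .two => True

/-- A genuine word of the Fibonacci poset `Z(k)`: all of its letters are valid. -/
def Word.Valid (k : ℕ) (w : Word k) : Prop := ∀ l ∈ w, l.Valid k

/-- The cover relation of the Fibonacci poset `Z(k)`:  `z` is covered by `w` iff `z` is
obtained from `w` either by changing a `2` into some `1_j` when all letters to the left of
that `2` are `2`'s, or by deleting the leftmost letter of the form `1_j`. -/
def ZCovers (k : ℕ) (z w : Word k) : Prop :=
  (∃ (p s : Word k) (j : ℕ), (∀ l ∈ p, l = Letter.two) ∧ 1 ≤ j ∧ j ≤ k ∧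
      w = p ++ Letter.two :: s ∧ z = p ++ Letter.one j :: s) ∨
  (∃ (p s : Word k) (j : ℕ), (∀ l ∈ p, l = Letter.two) ∧ 1 ≤ j ∧ j ≤ k ∧
      w = p ++ Letter.one j :: s ∧ z = p ++ s)

/-- `c 0 ⋖ c 1 ⋖ ⋯ ⋖ c n` is a saturated chain in `Z(k)` starting at the empty word. -/
def IsZChain (k n : ℕ) (c : ℕ → Word k) : Prop :=
  c 0 = [] ∧ ∀ i, i < n → ZCovers k (c i) (c (i + 1))

end KRF
namespace KRF

/-- The cells of a `k`-ribbon of height `j` of the first type, with base square at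
`(x, 0)`: `j` squares stacked vertically in a single column starting in the first row,
followed by `k − j` adjacent squares in the first row.  A cell `(x, r)` is the unit
square in (0-indexed) column `x` and row `r` (row `0` is the bottom row). -/
def ribbonCellsA (k x j : ℕ) : Finset (ℕ × ℕ) :=
  ((Finset.range j).image fun r => (x, r)) ∪
    ((Finset.range (k - j)).image fun t => (x + 1 + t, 0))

/-- The cells of a `k`-ribbon of height `j` of the second type, sitting in a column of
height 2 with base square at `(x, 0)`: `j` squares stacked vertically atop a column of
height `k + 1`, together with the `k − j` rightmost of the adjacent `k − 1` squares in
the first row. -/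
def ribbonCellsB (k x j : ℕ) : Finset (ℕ × ℕ) :=
  ((Finset.range j).image fun r => (x, k + 1 - j + r)) ∪
    ((Finset.range (k - j)).image fun t => (x + j + t, 0))

/-- A placed `k`-ribbon: its base `x`-coordinate, its height, and whether it is of the
second type (stacked atop a column of height `k + 1`). -/
structure GRibbon : Type where
  x : ℕ
  h : ℕ
  isTop : Bool
deriving DecidableEq

/-- The cells occupied by a placed `k`-ribbon. -/
def GRibbon.cells (k : ℕ) (r : GRibbon) : Finset (ℕ × ℕ) :=
  if r.isTop then ribbonCellsB k r.x r.h else ribbonCellsA k r.x r.h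

/-- The width (number of `x`-coordinates) of the group of squares of a letter. -/
def letterWidth (k : ℕ) : Letter k → ℕ
  | .one j => k - j + 1
  | .two => k

/-- The cells of the column contributed by a letter, with base square at `(x, 0)`:
a letter `1_j` contributes `j` squares stacked vertically starting in the first row
followed by `k − j` adjacent squares in the first row, and a letter `2` contributes
`k + 1` squares stacked vertically starting in the first row followed by `k − 1` adjacent
squares in the first row. -/
def letterCells (k x : ℕ) : Letter k → Finset (ℕ × ℕ)
  | .one j => ribbonCellsA k x j
  | .two => ((Finset.range (k + 1)).image fun r => (x, r)) ∪
      ((Finset.range (k - 1)).image fun t => (x + 1 + t, 0))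

/-- The cells of the `k`-ribbon Fibonacci shape of the word `w`, the leftmost column
starting at `x`-coordinate `x`. -/
def shapeCellsAux (k : ℕ) : ℕ → Word k → Finset (ℕ × ℕ)
  | _, [] => ∅
  | x, l :: w => letterCells k x l ∪ shapeCellsAux k (x + letterWidth k l) w

/-- The cells of the `k`-ribbon Fibonacci shape determined by the word `w`. -/
def shapeCells (k : ℕ) (w : Word k) : Finset (ℕ × ℕ) := shapeCellsAux k 0 w

/-- `R` is a `k`-ribbon tiling of the `k`-ribbon Fibonacci shape of `w`: a placement of
`k`-ribbons (of heights between `1` and `k`) with pairwise disjoint cells covering every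
square of the shape exactly once. -/
def IsGTiling (k : ℕ) (w : Word k) (R : Finset GRibbon) : Prop :=
  (∀ r ∈ R, 1 ≤ r.h ∧ r.h ≤ k) ∧
  (∀ r ∈ R, ∀ r' ∈ R, r ≠ r' → Disjoint (r.cells k) (r'.cells k)) ∧
  R.biUnion (fun r => r.cells k) = shapeCells k w

/-- The `x`-coordinate at which the `i`-th column (0-indexed) of the shape of `w` starts. -/
def colOffset (k : ℕ) (w : Word k) (i : ℕ) : ℕ := ((w.take i).map (letterWidth k)).sum

end KRF
namespace KRF

/-- The cells of the `i`-th column (0-indexed) of the `k`-ribbon Fibonacci shape of `w`. -/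
def colCells (k : ℕ) (w : Word k) (i : Fin w.length) : Finset (ℕ × ℕ) :=
  letterCells k (colOffset k w i) w[i]

-- membership lemmas
lemma memA {k x j : ℕ} {p : ℕ × ℕ} :
    p ∈ ribbonCellsA k x j ↔
      (p.1 = x ∧ p.2 < j) ∨ (p.2 = 0 ∧ x + 1 ≤ p.1 ∧ p.1 < x + 1 + (k - j)) := by
  simp only [ribbonCellsA, Finset.mem_union, Finset.mem_image, Finset.mem_range,
    Prod.ext_iff]
  constructor
  · rintro (⟨r, hr, h1, h2⟩ | ⟨t, ht, h1, h2⟩) <;> omega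
  · rintro (⟨h1, h2⟩ | ⟨h1, h2, h3⟩)
    · exact Or.inl ⟨p.2, h2, h1.symm, rfl⟩
    · exact Or.inr ⟨p.1 - (x+1), by omega, by omega, h1.symm⟩

lemma memB {k x j : ℕ} {p : ℕ × ℕ} (hj : j ≤ k + 1) :
    p ∈ ribbonCellsB k x j ↔
      (p.1 = x ∧ k + 1 - j ≤ p.2 ∧ p.2 ≤ k) ∨
        (p.2 = 0 ∧ x + j ≤ p.1 ∧ p.1 < x + j + (k - j)) := by
  simp only [ribbonCellsB, Finset.mem_union, Finset.mem_image, Finset.mem_range,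
    Prod.ext_iff]
  constructor
  · rintro (⟨r, hr, h1, h2⟩ | ⟨t, ht, h1, h2⟩) <;> omega
  · rintro (⟨h1, h2, h3⟩ | ⟨h1, h2, h3⟩)
    · exact Or.inl ⟨p.2 - (k + 1 - j), by omega, h1.symm, by omega⟩
    · exact Or.inr ⟨p.1 - (x + j), by omega, by omega, h1.symm⟩

lemma memTwo {k x : ℕ} {p : ℕ × ℕ} :
    p ∈ letterCells k x Letter.two ↔
      (p.1 = x ∧ p.2 ≤ k) ∨ (p.2 = 0 ∧ x + 1 ≤ p.1 ∧ p.1 < x + k) := by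
  simp only [letterCells, Finset.mem_union, Finset.mem_image, Finset.mem_range,
    Prod.ext_iff]
  constructor
  · rintro (⟨r, hr, h1, h2⟩ | ⟨t, ht, h1, h2⟩) <;> omega
  · rintro (⟨h1, h2⟩ | ⟨h1, h2, h3⟩)
    · exact Or.inl ⟨p.2, by omega, h1.symm, rfl⟩
    · exact Or.inr ⟨p.1 - (x + 1), by omega, by omega, h1.symm⟩

lemma memOne {k x j : ℕ} {p : ℕ × ℕ} :
    p ∈ letterCells k x (Letter.one j) ↔ p ∈ ribbonCellsA k x j := Iff.rfl

lemma letter_lb {k x : ℕ} {l : Letter k} {p : ℕ × ℕ} (hp : p ∈ letterCells k x l) :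
    x ≤ p.1 := by
  cases l with
  | one j => rw [memOne, memA] at hp; omega
  | two => rw [memTwo] at hp; omega

lemma letter_ub {k x : ℕ} (hk : 1 ≤ k) {l : Letter k} {p : ℕ × ℕ}
    (hp : p ∈ letterCells k x l) : p.1 < x + letterWidth k l := by
  cases l with
  | one j => rw [memOne, memA] at hp; simp only [letterWidth]; omega
  | two => rw [memTwo] at hp; simp only [letterWidth]; omega

lemma width_pos {k : ℕ} (hk : 1 ≤ k) (l : Letter k) : 1 ≤ letterWidth k l := by
  cases l <;> simp [letterWidth] <;> omega

lemma shape_lb {k : ℕ} {w : Word k} : ∀ {x : ℕ} {p : ℕ × ℕ},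
    p ∈ shapeCellsAux k x w → x ≤ p.1 := by
  induction w with
  | nil => intro x p hp; simp [shapeCellsAux] at hp
  | cons l w ih =>
    intro x p hp
    rw [shapeCellsAux, Finset.mem_union] at hp
    rcases hp with hp | hp
    · exact letter_lb hp
    · have := ih hp; omega

lemma memA' {k x j a b : ℕ} :
    (a, b) ∈ ribbonCellsA k x j ↔
      (a = x ∧ b < j) ∨ (b = 0 ∧ x + 1 ≤ a ∧ a < x + 1 + (k - j)) := memA

lemma memB' {k x j a b : ℕ} (hj : j ≤ k + 1) :
    (a, b) ∈ ribbonCellsB k x j ↔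
      (a = x ∧ k + 1 - j ≤ b ∧ b ≤ k) ∨
        (b = 0 ∧ x + j ≤ a ∧ a < x + j + (k - j)) := memB hj

lemma memTwo' {k x a b : ℕ} :
    (a, b) ∈ letterCells k x Letter.two ↔
      (a = x ∧ b ≤ k) ∨ (b = 0 ∧ x + 1 ≤ a ∧ a < x + k) := memTwo

lemma mem_cells_false {k : ℕ} {r : GRibbon} (hrt : r.isTop = false) {a b : ℕ} :
    (a, b) ∈ r.cells k ↔ (a, b) ∈ ribbonCellsA k r.x r.h := by
  unfold GRibbon.cells; rw [hrt]; simp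

lemma mem_cells_true {k : ℕ} {r : GRibbon} (hrt : r.isTop = true) {a b : ℕ} :
    (a, b) ∈ r.cells k ↔ (a, b) ∈ ribbonCellsB k r.x r.h := by
  unfold GRibbon.cells; rw [hrt]; simp

lemma cells_lb {k : ℕ} {r : GRibbon} (h2 : r.h ≤ k) {a b : ℕ}
    (hp : (a, b) ∈ r.cells k) : r.x ≤ a := by
  cases hrt : r.isTop
  · rw [mem_cells_false hrt, memA'] at hp; omega
  · rw [mem_cells_true hrt, memB' (by omega)] at hp; omega

lemma cellsA_def {k x h : ℕ} : (⟨x, h, false⟩ : GRibbon).cells k = ribbonCellsA k x h :=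
  rfl

lemma cellsB_def {k x h : ℕ} : (⟨x, h, true⟩ : GRibbon).cells k = ribbonCellsB k x h :=
  rfl

lemma cells_nonempty {k : ℕ} {r : GRibbon} (h1 : 1 ≤ r.h) (h2 : r.h ≤ k) :
    (r.cells k).Nonempty := by
  cases hr : r.isTop
  · exact ⟨(r.x, 0), (mem_cells_false hr).2 (memA'.2 (Or.inl ⟨rfl, h1⟩))⟩
  · exact ⟨(r.x, k),
      (mem_cells_true hr).2 ((memB' (by omega)).2 (Or.inl ⟨rfl, by omega, le_refl _⟩))⟩

lemma peel_one {k x m : ℕ} (hk : 1 ≤ k) (hm1 : 1 ≤ m) (hm2 : m ≤ k)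
    {w : Word k} {R : Finset GRibbon}
    (hhts : ∀ r ∈ R, 1 ≤ r.h ∧ r.h ≤ k)
    (hdisj : ∀ r ∈ R, ∀ r' ∈ R, r ≠ r' → Disjoint (r.cells k) (r'.cells k))
    (hcov : R.biUnion (fun r => r.cells k) = shapeCellsAux k x (Letter.one m :: w)) :
    (⟨x, m, false⟩ : GRibbon) ∈ R ∧
    (⟨x, m, false⟩ : GRibbon).cells k = letterCells k x (Letter.one m) ∧
    (R.erase ⟨x, m, false⟩).biUnion (fun r => r.cells k) =
      shapeCellsAux k (x + letterWidth k (Letter.one m)) w := by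
  have hshape : shapeCellsAux k x (Letter.one m :: w) =
      letterCells k x (Letter.one m) ∪
        shapeCellsAux k (x + letterWidth k (Letter.one m)) w := rfl
  have hwpos : letterWidth k (Letter.one m) = k - m + 1 := rfl
  -- cells of the shape in column x have rows < m
  have hcolx : ∀ b : ℕ, ((x, b) : ℕ × ℕ) ∈ shapeCellsAux k x (Letter.one m :: w) →
      b < m := by
    intro b hp
    rw [hshape, Finset.mem_union] at hp
    rcases hp with hp | hp
    · rcases memA'.1 hp with ⟨h1, h2⟩ | ⟨h1, h2, h3⟩ <;> omega
    · have := shape_lb hp; simp only at this; omega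
  have hsub : ∀ r ∈ R, r.cells k ⊆ shapeCellsAux k x (Letter.one m :: w) := by
    intro r hr
    rw [← hcov]
    exact Finset.subset_biUnion_of_mem _ hr
  have hrxlb : ∀ r ∈ R, x ≤ r.x := by
    intro r hr
    have hp : ((r.x, if r.isTop then k else 0) : ℕ × ℕ) ∈ r.cells k := by
      cases hrt : r.isTop
      · simp only [Bool.false_eq_true, if_false]
        exact (mem_cells_false hrt).2 (memA'.2 (Or.inl ⟨rfl, (hhts r hr).1⟩))
      · simp only [if_true]
        exact (mem_cells_true hrt).2 ((memB' (by have := (hhts r hr).2; omega)).2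
          (Or.inl ⟨rfl, by have := (hhts r hr).1; omega, le_refl _⟩))
    have h1 := shape_lb (hsub r hr hp)
    simpa using h1
  -- find the ribbon covering (x, 0)
  have hx0 : ((x, 0) : ℕ × ℕ) ∈ R.biUnion (fun r => r.cells k) := by
    rw [hcov, hshape, Finset.mem_union]
    exact Or.inl (memA'.2 (Or.inl ⟨rfl, hm1⟩))
  obtain ⟨r, hr, hpr⟩ := Finset.mem_biUnion.1 hx0
  have hh := hhts r hr
  have hxr := hrxlb r hr
  -- r is of the first type with r.x = x
  have hrA : r.isTop = false ∧ r.x = x := by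
    cases hrt : r.isTop
    · refine ⟨rfl, ?_⟩
      rcases memA'.1 ((mem_cells_false hrt).1 hpr) with ⟨h1, h2⟩ | ⟨h1, h2, h3⟩ <;> omega
    · exfalso
      rcases (memB' (by omega : r.h ≤ k + 1)).1 ((mem_cells_true hrt).1 hpr) with
        ⟨h1, h2, h3⟩ | ⟨h1, h2, h3⟩ <;> omega
  -- r.h = m
  have hrh : r.h = m := by
    have htop : ((x, r.h - 1) : ℕ × ℕ) ∈ r.cells k :=
      (mem_cells_false hrA.1).2 (memA'.2 (Or.inl ⟨hrA.2.symm, by omega⟩))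
    have h1 : r.h - 1 < m := hcolx _ (hsub r hr htop)
    by_contra hne
    have hlt : r.h < m := by omega
    have hx1 : ((x, r.h) : ℕ × ℕ) ∈ R.biUnion (fun r => r.cells k) := by
      rw [hcov, hshape, Finset.mem_union]
      exact Or.inl (memA'.2 (Or.inl ⟨rfl, hlt⟩))
    obtain ⟨r', hr', hpr'⟩ := Finset.mem_biUnion.1 hx1
    have hh' := hhts r' hr'
    have hxr' := hrxlb r' hr'
    have hne' : r' ≠ r := by
      intro h; subst h
      rcases memA'.1 ((mem_cells_false hrA.1).1 hpr') with ⟨h1, h2⟩ | ⟨h1, h2, h3⟩ <;>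
        omega
    cases hrt' : r'.isTop
    · -- r' of first type: shares (x,0) with r
      rcases memA'.1 ((mem_cells_false hrt').1 hpr') with ⟨h1, h2⟩ | ⟨h1, h2, h3⟩
      · have : ((x, 0) : ℕ × ℕ) ∈ r'.cells k :=
          (mem_cells_false hrt').2 (memA'.2 (Or.inl ⟨h1, by omega⟩))
        exact (Finset.disjoint_left.1 (hdisj r hr r' hr' (Ne.symm hne')) hpr this).elim
      · omega
    · -- r' of second type: contains (x, k), impossible in this column
      rcases (memB' (by omega : r'.h ≤ k + 1)).1 ((mem_cells_true hrt').1 hpr') with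
        ⟨h1, h2, h3⟩ | ⟨h1, h2, h3⟩
      · have hck : ((x, k) : ℕ × ℕ) ∈ r'.cells k :=
          (mem_cells_true hrt').2
            ((memB' (by omega : r'.h ≤ k + 1)).2 (Or.inl ⟨h1, by omega, le_refl _⟩))
        have := hcolx _ (hsub r' hr' hck)
        omega
      · omega
  have hreq : r = ⟨x, m, false⟩ := by
    obtain ⟨rx, rh, rt⟩ := r
    simp only at hrA hrh
    simp [hrA.1, hrA.2, hrh]
  rw [hreq] at hr
  have hcells : (⟨x, m, false⟩ : GRibbon).cells k = letterCells k x (Letter.one m) := by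
    simp [GRibbon.cells, letterCells]
  refine ⟨hr, hcells, ?_⟩
  ext p
  simp only [Finset.mem_biUnion, Finset.mem_erase]
  constructor
  · rintro ⟨r'', ⟨hne'', hr''⟩, hp''⟩
    have hp : p ∈ shapeCellsAux k x (Letter.one m :: w) := hsub r'' hr'' hp''
    rw [hshape, Finset.mem_union] at hp
    rcases hp with hp | hp
    · rw [← hcells] at hp
      exact (Finset.disjoint_left.1 (hdisj _ hr r'' hr'' (Ne.symm hne'')) hp hp'').elim
    · exact hp
  · intro hp
    have hp' : p ∈ shapeCellsAux k x (Letter.one m :: w) := by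
      rw [hshape]; exact Finset.mem_union_right _ hp
    rw [← hcov] at hp'
    obtain ⟨r'', hr'', hp''⟩ := Finset.mem_biUnion.1 hp'
    refine ⟨r'', ⟨?_, hr''⟩, hp''⟩
    intro h; subst h
    rw [hcells] at hp''
    have h1 := letter_ub hk hp''
    have h2 := shape_lb hp
    omega

lemma peel_two {k x : ℕ} (hk : 1 ≤ k)
    {w : Word k} {R : Finset GRibbon}
    (hhts : ∀ r ∈ R, 1 ≤ r.h ∧ r.h ≤ k)
    (hdisj : ∀ r ∈ R, ∀ r' ∈ R, r ≠ r' → Disjoint (r.cells k) (r'.cells k))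
    (hcov : R.biUnion (fun r => r.cells k) = shapeCellsAux k x (Letter.two :: w)) :
    ∃ j : ℕ, 1 ≤ j ∧ j ≤ k ∧
    (⟨x, k + 1 - j, false⟩ : GRibbon) ∈ R ∧
    (⟨x, j, true⟩ : GRibbon) ∈ R ∧
    (⟨x, k + 1 - j, false⟩ : GRibbon).cells k ∪ (⟨x, j, true⟩ : GRibbon).cells k =
      letterCells k x Letter.two ∧
    ((R.erase ⟨x, k + 1 - j, false⟩).erase ⟨x, j, true⟩).biUnion (fun r => r.cells k) =
      shapeCellsAux k (x + letterWidth k Letter.two) w := by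
  have hshape : shapeCellsAux k x (Letter.two :: w) =
      letterCells k x Letter.two ∪ shapeCellsAux k (x + letterWidth k Letter.two) w := rfl
  have hwidth : letterWidth k Letter.two = k := rfl
  have hcolx : ∀ b : ℕ, ((x, b) : ℕ × ℕ) ∈ shapeCellsAux k x (Letter.two :: w) →
      b ≤ k := by
    intro b hp
    rw [hshape, Finset.mem_union] at hp
    rcases hp with hp | hp
    · rcases memTwo'.1 hp with ⟨h1, h2⟩ | ⟨h1, h2, h3⟩ <;> omega
    · have := shape_lb hp; simp only at this; omega
  have hsub : ∀ r ∈ R, r.cells k ⊆ shapeCellsAux k x (Letter.two :: w) := by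
    intro r hr
    rw [← hcov]
    exact Finset.subset_biUnion_of_mem _ hr
  have hrxlb : ∀ r ∈ R, x ≤ r.x := by
    intro r hr
    have hp : ((r.x, if r.isTop then k else 0) : ℕ × ℕ) ∈ r.cells k := by
      cases hrt : r.isTop
      · simp only [Bool.false_eq_true, if_false]
        exact (mem_cells_false hrt).2 (memA'.2 (Or.inl ⟨rfl, (hhts r hr).1⟩))
      · simp only [if_true]
        exact (mem_cells_true hrt).2 ((memB' (by have := (hhts r hr).2; omega)).2
          (Or.inl ⟨rfl, by have := (hhts r hr).1; omega, le_refl _⟩))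
    have h1 := shape_lb (hsub r hr hp)
    simpa using h1
  -- the ribbon covering (x, 0)
  have hx0 : ((x, 0) : ℕ × ℕ) ∈ R.biUnion (fun r => r.cells k) := by
    rw [hcov, hshape, Finset.mem_union]
    exact Or.inl (memTwo'.2 (Or.inl ⟨rfl, by omega⟩))
  obtain ⟨r, hr, hpr⟩ := Finset.mem_biUnion.1 hx0
  have hh := hhts r hr
  have hxr := hrxlb r hr
  have hrA : r.isTop = false ∧ r.x = x := by
    cases hrt : r.isTop
    · refine ⟨rfl, ?_⟩
      rcases memA'.1 ((mem_cells_false hrt).1 hpr) with ⟨h1, h2⟩ | ⟨h1, h2, h3⟩ <;> omega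
    · exfalso
      rcases (memB' (by omega : r.h ≤ k + 1)).1 ((mem_cells_true hrt).1 hpr) with
        ⟨h1, h2, h3⟩ | ⟨h1, h2, h3⟩ <;> omega
  -- the ribbon covering (x, k)
  have hxk : ((x, k) : ℕ × ℕ) ∈ R.biUnion (fun r => r.cells k) := by
    rw [hcov, hshape, Finset.mem_union]
    exact Or.inl (memTwo'.2 (Or.inl ⟨rfl, le_refl _⟩))
  obtain ⟨r', hr', hpr'⟩ := Finset.mem_biUnion.1 hxk
  have hh' := hhts r' hr'
  have hxr' := hrxlb r' hr'
  have hrB : r'.isTop = true ∧ r'.x = x := by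
    cases hrt' : r'.isTop
    · exfalso
      rcases memA'.1 ((mem_cells_false hrt').1 hpr') with ⟨h1, h2⟩ | ⟨h1, h2, h3⟩ <;>
        omega
    · refine ⟨rfl, ?_⟩
      rcases (memB' (by omega : r'.h ≤ k + 1)).1 ((mem_cells_true hrt').1 hpr') with
        ⟨h1, h2, h3⟩ | ⟨h1, h2, h3⟩ <;> omega
  have hne : r ≠ r' := by
    intro h
    rw [h, hrB.1] at hrA
    exact absurd hrA.1 (by simp)
  -- r.h + r'.h = k + 1
  have hsum : r.h + r'.h = k + 1 := by
    rcases Nat.lt_trichotomy (r.h + r'.h) (k + 1) with hlt | heq | hgt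
    · exfalso
      -- (x, r.h) is uncovered by r and r'; its coverer clashes
      have hx1 : ((x, r.h) : ℕ × ℕ) ∈ R.biUnion (fun r => r.cells k) := by
        rw [hcov, hshape, Finset.mem_union]
        exact Or.inl (memTwo'.2 (Or.inl ⟨rfl, by omega⟩))
      obtain ⟨r'', hr'', hpr''⟩ := Finset.mem_biUnion.1 hx1
      have hh'' := hhts r'' hr''
      have hxr'' := hrxlb r'' hr''
      have hne1 : r'' ≠ r := by
        intro h; subst h
        rcases memA'.1 ((mem_cells_false hrA.1).1 hpr'') with ⟨h1, h2⟩ | ⟨h1, h2, h3⟩ <;>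
          omega
      have hne2 : r'' ≠ r' := by
        intro h; subst h
        rcases (memB' (by omega : r''.h ≤ k + 1)).1 ((mem_cells_true hrB.1).1 hpr'') with
          ⟨h1, h2, h3⟩ | ⟨h1, h2, h3⟩ <;> omega
      cases hrt'' : r''.isTop
      · rcases memA'.1 ((mem_cells_false hrt'').1 hpr'') with ⟨h1, h2⟩ | ⟨h1, h2, h3⟩
        · have : ((x, 0) : ℕ × ℕ) ∈ r''.cells k :=
            (mem_cells_false hrt'').2 (memA'.2 (Or.inl ⟨h1, by omega⟩))
          exact Finset.disjoint_left.1 (hdisj r hr r'' hr'' (Ne.symm hne1)) hpr this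
        · omega
      · rcases (memB' (by omega : r''.h ≤ k + 1)).1 ((mem_cells_true hrt'').1 hpr'') with
          ⟨h1, h2, h3⟩ | ⟨h1, h2, h3⟩
        · have : ((x, k) : ℕ × ℕ) ∈ r''.cells k :=
            (mem_cells_true hrt'').2 ((memB' (by omega : r''.h ≤ k + 1)).2
              (Or.inl ⟨h1, by omega, le_refl _⟩))
          exact Finset.disjoint_left.1 (hdisj r' hr' r'' hr'' (Ne.symm hne2)) hpr' this
        · omega
    · exact heq
    · exfalso
      -- r and r' overlap at (x, k + 1 - r'.h)
      have h1 : ((x, k + 1 - r'.h) : ℕ × ℕ) ∈ r.cells k :=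
        (mem_cells_false hrA.1).2 (memA'.2 (Or.inl ⟨hrA.2.symm, by omega⟩))
      have h2 : ((x, k + 1 - r'.h) : ℕ × ℕ) ∈ r'.cells k :=
        (mem_cells_true hrB.1).2 ((memB' (by omega : r'.h ≤ k + 1)).2
          (Or.inl ⟨hrB.2.symm, le_refl _, by omega⟩))
      exact Finset.disjoint_left.1 (hdisj r hr r' hr' hne) h1 h2
  refine ⟨r'.h, hh'.1, hh'.2, ?_⟩
  have hreq : r = ⟨x, k + 1 - r'.h, false⟩ := by
    obtain ⟨rx, rh, rt⟩ := r
    simp only at hrA hsum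
    simp [hrA.1, hrA.2]
    omega
  have hreq' : r' = ⟨x, r'.h, true⟩ := by
    obtain ⟨rx, rh, rt⟩ := r'
    simp only at hrB
    simp [hrB.1, hrB.2]
  rw [hreq] at hr hpr
  rw [hreq'] at hr' hpr' hne
  have hcells : (⟨x, k + 1 - r'.h, false⟩ : GRibbon).cells k ∪
      (⟨x, r'.h, true⟩ : GRibbon).cells k = letterCells k x Letter.two := by
    ext ⟨a, b⟩
    rw [Finset.mem_union, cellsA_def, cellsB_def, memA',
      memB' (by omega : r'.h ≤ k + 1), memTwo']
    constructor
    · rintro ((⟨h1, h2⟩ | ⟨h1, h2, h3⟩) | (⟨h1, h2, h3⟩ | ⟨h1, h2, h3⟩)) <;>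
        [exact Or.inl ⟨h1, by omega⟩; exact Or.inr ⟨h1, by omega, by omega⟩;
         exact Or.inl ⟨h1, by omega⟩; exact Or.inr ⟨h1, by omega, by omega⟩]
    · rintro (⟨h1, h2⟩ | ⟨h1, h2, h3⟩)
      · rcases le_or_gt (k + 1 - r'.h) b with hb | hb
        · exact Or.inr (Or.inl ⟨h1, hb, h2⟩)
        · exact Or.inl (Or.inl ⟨h1, hb⟩)
      · rcases lt_or_ge a (x + r'.h) with ha | ha
        · exact Or.inl (Or.inr ⟨h1, h2, by omega⟩)
        · exact Or.inr (Or.inr ⟨h1, ha, by omega⟩)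
  refine ⟨hr, hr', hcells, ?_⟩
  ext p
  simp only [Finset.mem_biUnion, Finset.mem_erase]
  constructor
  · rintro ⟨r'', ⟨hne2, hne1, hr''⟩, hp''⟩
    have hp : p ∈ shapeCellsAux k x (Letter.two :: w) := hsub r'' hr'' hp''
    rw [hshape, Finset.mem_union] at hp
    rcases hp with hp | hp
    · rw [← hcells, Finset.mem_union] at hp
      rcases hp with hp | hp
      · exact (Finset.disjoint_left.1 (hdisj _ hr r'' hr'' (Ne.symm hne1)) hp hp'').elim
      · exact (Finset.disjoint_left.1 (hdisj _ hr' r'' hr'' (Ne.symm hne2)) hp hp'').elim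
    · exact hp
  · intro hp
    have hp' : p ∈ shapeCellsAux k x (Letter.two :: w) := by
      rw [hshape]; exact Finset.mem_union_right _ hp
    rw [← hcov] at hp'
    obtain ⟨r'', hr'', hp''⟩ := Finset.mem_biUnion.1 hp'
    have hlb := shape_lb hp
    refine ⟨r'', ⟨?_, ?_, hr''⟩, hp''⟩
    · intro h; subst h
      have : p ∈ letterCells k x Letter.two := by
        rw [← hcells]; exact Finset.mem_union_right _ hp''
      have := letter_ub hk this
      rw [hwidth] at *
      omega
    · intro h; subst h
      have : p ∈ letterCells k x Letter.two := by
        rw [← hcells]; exact Finset.mem_union_left _ hp''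
      have := letter_ub hk this
      rw [hwidth] at *
      omega

lemma colOffset_cons_zero {k : ℕ} {l : Letter k} {w : Word k} :
    colOffset k (l :: w) 0 = 0 := rfl

lemma colOffset_cons_succ {k : ℕ} {l : Letter k} {w : Word k} {i : ℕ} :
    colOffset k (l :: w) (i + 1) = letterWidth k l + colOffset k w i := by
  simp [colOffset]

lemma filter_erase_not {R : Finset GRibbon} {A : GRibbon} (hA : A ∈ R)
    (p : GRibbon → Prop) [DecidablePred p] (h : ¬ p A) :
    R.filter p = (R.erase A).filter p := by
  conv_lhs => rw [← Finset.insert_erase hA]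
  rw [Finset.filter_insert, if_neg h]

lemma not_sub_of_sep {k : ℕ} {r : GRibbon} (h1 : 1 ≤ r.h) (h2 : r.h ≤ k)
    {S T : Finset (ℕ × ℕ)} (hT : r.cells k ⊆ T)
    (hsep : ∀ p ∈ T, p ∉ S) : ¬ r.cells k ⊆ S := by
  intro hs
  obtain ⟨p, hp⟩ := cells_nonempty h1 h2
  exact hsep p (hT hp) (hs hp)

lemma structure_aux (k : ℕ) (hk : 1 ≤ k) (w : Word k) :
    Word.Valid k w → ∀ (x : ℕ) (R : Finset GRibbon),
    (∀ r ∈ R, 1 ≤ r.h ∧ r.h ≤ k) →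
    (∀ r ∈ R, ∀ r' ∈ R, r ≠ r' → Disjoint (r.cells k) (r'.cells k)) →
    R.biUnion (fun r => r.cells k) = shapeCellsAux k x w →
    (∀ r ∈ R, ∃ i : ℕ, ∃ hi : i < w.length,
        r.cells k ⊆ letterCells k (x + colOffset k w i) w[i]) ∧
    (∀ (i : ℕ) (hi : i < w.length) (j : ℕ), w[i] = Letter.one j →
      R.filter (fun r => r.cells k ⊆ letterCells k (x + colOffset k w i) w[i]) =
        {⟨x + colOffset k w i, j, false⟩}) ∧
    (∀ (i : ℕ) (hi : i < w.length), w[i] = Letter.two →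
      ∃ j, 1 ≤ j ∧ j ≤ k ∧
        R.filter (fun r => r.cells k ⊆ letterCells k (x + colOffset k w i) w[i]) =
          {⟨x + colOffset k w i, k + 1 - j, false⟩, ⟨x + colOffset k w i, j, true⟩}) ∧
    R.card = Word.rank w := by
  induction w with
  | nil =>
    intro _ x R hhts hdisj hcov
    have hR : R = ∅ := by
      rw [Finset.eq_empty_iff_forall_notMem]
      intro r hr
      obtain ⟨p, hp⟩ := cells_nonempty (hhts r hr).1 (hhts r hr).2
      have : p ∈ R.biUnion (fun r => r.cells k) :=
        Finset.subset_biUnion_of_mem _ hr hp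
      rw [hcov] at this
      simp [shapeCellsAux] at this
    subst hR
    refine ⟨by simp, by simp, by simp, by simp [Word.rank]⟩
  | cons l w ih =>
    intro hw x R hhts hdisj hcov
    have hwt : Word.Valid k w := fun l' hl' => hw l' (List.mem_cons_of_mem _ hl')
    -- facts about cells in / beyond the first column
    have hcol0_ub : ∀ p ∈ letterCells k x l, p.1 < x + letterWidth k l :=
      fun p hp => letter_ub hk hp
    cases l with
    | one m =>
      obtain ⟨hm1, hm2⟩ := hw (Letter.one m) List.mem_cons_self
      obtain ⟨hA, hcells, hcov'⟩ := peel_one hk hm1 hm2 hhts hdisj hcov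
      set A : GRibbon := ⟨x, m, false⟩ with hAdef
      set R' := R.erase A with hR'def
      have hhts' : ∀ r ∈ R', 1 ≤ r.h ∧ r.h ≤ k :=
        fun r hr => hhts r (Finset.mem_of_mem_erase hr)
      have hdisj' : ∀ r ∈ R', ∀ r' ∈ R', r ≠ r' → Disjoint (r.cells k) (r'.cells k) :=
        fun r hr r' hr' => hdisj r (Finset.mem_of_mem_erase hr) r'
          (Finset.mem_of_mem_erase hr')
      obtain ⟨ih1, ih2, ih3, ih4⟩ := ih hwt (x + letterWidth k (Letter.one m)) R'
        hhts' hdisj' hcov'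
      -- tail ribbons have cells far to the right
      have htail : ∀ r ∈ R', r.cells k ⊆
          shapeCellsAux k (x + letterWidth k (Letter.one m)) w := by
        intro r hr
        rw [← hcov']
        exact Finset.subset_biUnion_of_mem _ hr
      have htail_not0 : ∀ r ∈ R', ¬ r.cells k ⊆ letterCells k x (Letter.one m) := by
        intro r hr
        refine not_sub_of_sep (hhts' r hr).1 (hhts' r hr).2 (htail r hr) ?_
        intro p hp hps
        have h1 := shape_lb hp
        have h2 := letter_ub hk hps
        omega
      -- the peeled ribbon is not in a later column
      have hA_not_later : ∀ i : ℕ, ∀ l' : Letter k,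
          ¬ A.cells k ⊆ letterCells k (x + letterWidth k (Letter.one m)
            + colOffset k w i) l' := by
        intro i l'
        refine not_sub_of_sep (r := A) hm1 hm2 (le_of_eq hcells) ?_
        intro p hp hps
        have h1 := letter_ub hk hp
        have h2 := letter_lb hps
        omega
      refine ⟨?_, ?_, ?_, ?_⟩
      · -- every ribbon lies in a column
        intro r hr
        by_cases hrA : r = A
        · refine ⟨0, by simp, ?_⟩
          simp only [colOffset_cons_zero, Nat.add_zero, List.getElem_cons_zero]
          rw [hrA, hcells]
        · obtain ⟨i, hi, hsub⟩ := ih1 r (Finset.mem_erase.2 ⟨hrA, hr⟩)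
          refine ⟨i + 1, by simpa using Nat.succ_lt_succ hi, ?_⟩
          simp only [colOffset_cons_succ, List.getElem_cons_succ, ← Nat.add_assoc]
          exact hsub
      · -- columns from letters 1_j
        intro i hi j hj
        cases i with
        | zero =>
          simp only [List.getElem_cons_zero] at hj
          cases hj
          simp only [colOffset_cons_zero, Nat.add_zero, List.getElem_cons_zero]
          ext r
          erw [Finset.mem_filter]; simp only [Finset.mem_singleton]
          constructor
          · rintro ⟨hr, hsub⟩
            by_contra hrA
            exact htail_not0 r (Finset.mem_erase.2 ⟨hrA, hr⟩) hsub
          · rintro rfl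
            exact ⟨hA, le_of_eq hcells⟩
        | succ i =>
          simp only [List.getElem_cons_succ] at hj
          simp only [colOffset_cons_succ, List.getElem_cons_succ, ← Nat.add_assoc]
          rw [filter_erase_not hA _ (hA_not_later i _)]
          exact ih2 i (by simp only [List.length_cons] at hi; omega) j hj
      · -- columns from letters 2
        intro i hi hj
        cases i with
        | zero =>
          exfalso
          have h : (Letter.one m : Letter k) = Letter.two := by simpa using hj
          cases h
        | succ i =>
          simp only [List.getElem_cons_succ] at hj
          simp only [colOffset_cons_succ, List.getElem_cons_succ, ← Nat.add_assoc]
          rw [filter_erase_not hA _ (hA_not_later i _)]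
          exact ih3 i (by simp only [List.length_cons] at hi; omega) hj
      · -- cardinality
        have : R.card = R'.card + 1 := by
          rw [hR'def, ← Finset.insert_erase hA,
            Finset.card_insert_of_notMem (Finset.notMem_erase _ _),
            Finset.erase_insert (Finset.notMem_erase _ _)]
        rw [this, ih4]
        simp [Word.rank, Letter.rank]
        omega
    | two =>
      obtain ⟨j0, hj1, hj2, hA, hB, hcells, hcov'⟩ := peel_two hk hhts hdisj hcov
      set A : GRibbon := ⟨x, k + 1 - j0, false⟩ with hAdef
      set B : GRibbon := ⟨x, j0, true⟩ with hBdef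
      have hABne : B ≠ A := by simp [hAdef, hBdef]
      have hBA : B ∈ R.erase A := Finset.mem_erase.2 ⟨hABne, hB⟩
      set R' := (R.erase A).erase B with hR'def
      have hR'sub : ∀ r ∈ R', r ∈ R := by
        intro r hr
        exact Finset.mem_of_mem_erase (Finset.mem_of_mem_erase hr)
      have hhts' : ∀ r ∈ R', 1 ≤ r.h ∧ r.h ≤ k := fun r hr => hhts r (hR'sub r hr)
      have hdisj' : ∀ r ∈ R', ∀ r' ∈ R', r ≠ r' → Disjoint (r.cells k) (r'.cells k) :=
        fun r hr r' hr' => hdisj r (hR'sub r hr) r' (hR'sub r' hr')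
      obtain ⟨ih1, ih2, ih3, ih4⟩ := ih hwt (x + letterWidth k Letter.two) R'
        hhts' hdisj' hcov'
      have htail : ∀ r ∈ R', r.cells k ⊆
          shapeCellsAux k (x + letterWidth k Letter.two) w := by
        intro r hr
        rw [← hcov']
        exact Finset.subset_biUnion_of_mem _ hr
      have htail_not0 : ∀ r ∈ R', ¬ r.cells k ⊆ letterCells k x Letter.two := by
        intro r hr
        refine not_sub_of_sep (hhts' r hr).1 (hhts' r hr).2 (htail r hr) ?_
        intro p hp hps
        have h1 := shape_lb hp
        have h2 := letter_ub hk hps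
        omega
      have hAsub : A.cells k ⊆ letterCells k x Letter.two := by
        rw [← hcells]; exact Finset.subset_union_left
      have hBsub : B.cells k ⊆ letterCells k x Letter.two := by
        rw [← hcells]; exact Finset.subset_union_right
      have hA_not_later : ∀ i : ℕ, ∀ l' : Letter k,
          ¬ A.cells k ⊆ letterCells k (x + letterWidth k Letter.two
            + colOffset k w i) l' := by
        intro i l'
        refine not_sub_of_sep (r := A) (by simp [hAdef]; omega) (by simp [hAdef]; omega)
          hAsub ?_
        intro p hp hps
        have h1 := letter_ub hk hp
        have h2 := letter_lb hps
        omega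
      have hB_not_later : ∀ i : ℕ, ∀ l' : Letter k,
          ¬ B.cells k ⊆ letterCells k (x + letterWidth k Letter.two
            + colOffset k w i) l' := by
        intro i l'
        refine not_sub_of_sep (r := B) (by simp [hBdef]; omega) (by simp [hBdef]; omega)
          hBsub ?_
        intro p hp hps
        have h1 := letter_ub hk hp
        have h2 := letter_lb hps
        omega
      refine ⟨?_, ?_, ?_, ?_⟩
      · intro r hr
        by_cases hrA : r = A
        · refine ⟨0, by simp, ?_⟩
          simp only [colOffset_cons_zero, Nat.add_zero, List.getElem_cons_zero]
          rw [hrA]; exact hAsub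
        · by_cases hrB : r = B
          · refine ⟨0, by simp, ?_⟩
            simp only [colOffset_cons_zero, Nat.add_zero, List.getElem_cons_zero]
            rw [hrB]; exact hBsub
          · obtain ⟨i, hi, hsub⟩ := ih1 r
              (Finset.mem_erase.2 ⟨hrB, Finset.mem_erase.2 ⟨hrA, hr⟩⟩)
            refine ⟨i + 1, by simpa using Nat.succ_lt_succ hi, ?_⟩
            simp only [colOffset_cons_succ, List.getElem_cons_succ, ← Nat.add_assoc]
            exact hsub
      · intro i hi j hj
        cases i with
        | zero =>
          exfalso
          have h : (Letter.two : Letter k) = Letter.one j := by simpa using hj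
          cases h
        | succ i =>
          simp only [List.getElem_cons_succ] at hj
          simp only [colOffset_cons_succ, List.getElem_cons_succ, ← Nat.add_assoc]
          rw [filter_erase_not hA _ (hA_not_later i _),
            filter_erase_not hBA _ (hB_not_later i _)]
          exact ih2 i (by simp only [List.length_cons] at hi; omega) j hj
      · intro i hi hj
        cases i with
        | zero =>
          refine ⟨j0, hj1, hj2, ?_⟩
          simp only [colOffset_cons_zero, Nat.add_zero, List.getElem_cons_zero]
          ext r
          erw [Finset.mem_filter]; simp only [Finset.mem_insert, Finset.mem_singleton]
          constructor
          · rintro ⟨hr, hsub⟩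
            by_contra hrAB
            push_neg at hrAB
            exact htail_not0 r
              (Finset.mem_erase.2 ⟨hrAB.2, Finset.mem_erase.2 ⟨hrAB.1, hr⟩⟩) hsub
          · rintro (rfl | rfl)
            exacts [⟨hA, hAsub⟩, ⟨hB, hBsub⟩]
        | succ i =>
          simp only [List.getElem_cons_succ] at hj
          simp only [colOffset_cons_succ, List.getElem_cons_succ, ← Nat.add_assoc]
          rw [filter_erase_not hA _ (hA_not_later i _),
            filter_erase_not hBA _ (hB_not_later i _)]
          exact ih3 i (by simp only [List.length_cons] at hi; omega) hj
      · have h2 : (R.erase A).card = R'.card + 1 := by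
          rw [hR'def, ← Finset.insert_erase hBA,
            Finset.card_insert_of_notMem (Finset.notMem_erase _ _),
            Finset.erase_insert (Finset.notMem_erase _ _)]
        have h1 : R.card = (R.erase A).card + 1 := by
          rw [← Finset.insert_erase hA,
            Finset.card_insert_of_notMem (Finset.notMem_erase _ _),
            Finset.erase_insert (Finset.notMem_erase _ _)]
        rw [h1, h2, ih4]
        simp [Word.rank, Letter.rank]
        omega


/-- In any `k`-ribbon tiling of a `k`-ribbon Fibonacci shape, every
`k`-ribbon lies entirely within a single column of the shape: each column of height 1
arising from a letter `1_j` is tiled by exactly one `k`-ribbon, which has height `j`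
(and is of the first type), and each column of height 2 (arising from a letter `2`) is
tiled by exactly two `k`-ribbons, one of some height `j` (of the second type) stacked on
top of one of height `k + 1 − j` (of the first type).  Consequently, all `k`-ribbon
tilings of a given `k`-ribbon Fibonacci shape have the same number of `k`-ribbons and
involve the same columns. -/
theorem tiling_ribbons_lie_in_columns (k : ℕ) (hk : 1 ≤ k) (w : Word k)
    (hw : Word.Valid k w) (R : Finset GRibbon) (hR : IsGTiling k w R) :
    (∀ r ∈ R, ∃ i : Fin w.length, GRibbon.cells k r ⊆ colCells k w i) ∧
    (∀ (i : Fin w.length) (j : ℕ), w[i] = Letter.one j →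
      R.filter (fun r => GRibbon.cells k r ⊆ colCells k w i) =
        {⟨colOffset k w (i : ℕ), j, false⟩}) ∧
    (∀ i : Fin w.length, w[i] = Letter.two →
      ∃ j, 1 ≤ j ∧ j ≤ k ∧
        R.filter (fun r => GRibbon.cells k r ⊆ colCells k w i) =
          {⟨colOffset k w (i : ℕ), k + 1 - j, false⟩, ⟨colOffset k w (i : ℕ), j, true⟩}) ∧
    (∀ R' : Finset GRibbon, IsGTiling k w R' → R.card = R'.card) := by
  obtain ⟨hhts, hdisj, hcov⟩ := hR
  obtain ⟨h1, h2, h3, h4⟩ := structure_aux k hk w hw 0 R hhts hdisj hcov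
  have hpred : ∀ i : Fin w.length, ∀ r : GRibbon,
      (GRibbon.cells k r ⊆ colCells k w i) ↔
        (GRibbon.cells k r ⊆ letterCells k (0 + colOffset k w (i : ℕ)) w[(i : ℕ)]) := by
    intro i r
    rw [colCells, Nat.zero_add]
    simp [Fin.getElem_fin]
  refine ⟨?_, ?_, ?_, ?_⟩
  · intro r hr
    obtain ⟨i, hi, hsub⟩ := h1 r hr
    refine ⟨⟨i, hi⟩, ?_⟩
    rw [hpred ⟨i, hi⟩ r]
    exact hsub
  · intro i j hj
    rw [Finset.filter_congr (fun r _ => hpred i r)]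
    have := h2 (i : ℕ) i.isLt j (by simpa using hj)
    rw [Nat.zero_add] at this ⊢
    exact this
  · intro i hj
    obtain ⟨j, hj1, hj2, hfil⟩ := h3 (i : ℕ) i.isLt (by simpa using hj)
    refine ⟨j, hj1, hj2, ?_⟩
    rw [Finset.filter_congr (fun r _ => hpred i r)]
    rw [Nat.zero_add] at hfil ⊢
    exact hfil
  · intro R' hR'
    obtain ⟨hhts', hdisj', hcov'⟩ := hR'
    obtain ⟨_, _, _, h4'⟩ := structure_aux k hk w hw 0 R' hhts' hdisj' hcov'
    rw [h4, h4']

end KRF
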